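/- Let m be a positive even integer and b, μ real numbers. Let B be the m×m complex matrix with diagonal entries B_{s,s} = 2ι b cos(sπ/(m+1)) for s = 1, …, m, anti-diagonal entries B_{s,m+1-s} = (-1)^{m-s} ι^m μ for s = 1, …, m, and zeros elsewhere. Then for every complex number t, det( t·I_m - B ) = ∏_{s=1}^{m/2} ( t^2 + 4 b^2 cos^2(sπ/(m+1)) + μ^2 ). In particular the eigenvalues of B are ± ι √( 4b^2 cos^2(sπ/(m+1)) + μ^2 ) for s = 1, …, m/2. -/

import Mathlib

/-- The `m × m` matrix `B` with diagonal entries `B_{s,s} = 2 ι b cos(sπ/(m+1))`,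
anti-diagonal entries `B_{s,m+1-s} = (-1)^{m-s} ι^m μ` (1-based indexing) and zeros
elsewhere.  Since `m` is even the diagonal and anti-diagonal do not meet. -/
noncomputable def Bmat (m : ℕ) (b μ : ℝ) : Matrix (Fin m) (Fin m) ℂ :=
  Matrix.of fun i j =>
    if i = j then
      2 * Complex.I * (b : ℂ) *
        ((Real.cos (((i : ℕ) + 1) * Real.pi / ((m : ℝ) + 1)) : ℝ) : ℂ)
    else if (i : ℕ) + (j : ℕ) + 1 = m then
      (-1) ^ (m - 1 - (i : ℕ)) * Complex.I ^ m * (μ : ℂ)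
    else 0

noncomputable def crossEquiv (m : ℕ) (hmod : m % 2 = 0) : (Fin 2 × Fin (m / 2)) ≃ Fin m :=
  Equiv.ofBijective
    (fun p => ⟨if (p.1 : ℕ) = 0 then (p.2 : ℕ) else m - 1 - (p.2 : ℕ), by
      have := p.2.2; split <;> omega⟩)
    (by
      rw [Fintype.bijective_iff_injective_and_card]
      constructor
      · rintro ⟨i, s⟩ ⟨j, s'⟩ h
        have hv : (if (i : ℕ) = 0 then (s : ℕ) else m - 1 - (s : ℕ))
            = (if (j : ℕ) = 0 then (s' : ℕ) else m - 1 - (s' : ℕ)) := congrArg Fin.val h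
        have hi := i.2
        have hj := j.2
        have hs := s.2
        have hs' := s'.2
        split_ifs at hv with h1 h2 h2 <;> [skip; exact absurd hv (by omega);
          exact absurd hv (by omega); skip] <;>
          (simp only [Prod.mk.injEq]; exact ⟨Fin.ext (by omega), Fin.ext (by omega)⟩)
      · simp
        omega)

lemma crossEquiv_zero (m : ℕ) (hmod : m % 2 = 0) (s : Fin (m / 2)) :
    ((crossEquiv m hmod (0, s) : Fin m) : ℕ) = (s : ℕ) := id rfl

lemma crossEquiv_one (m : ℕ) (hmod : m % 2 = 0) (s : Fin (m / 2)) :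
    ((crossEquiv m hmod (1, s) : Fin m) : ℕ) = m - 1 - (s : ℕ) := id rfl

lemma Amat_apply (m : ℕ) (b μ : ℝ) (t : ℂ) (i j : Fin m) :
    (t • (1 : Matrix (Fin m) (Fin m) ℂ) - Bmat m b μ) i j =
      if (i : ℕ) = (j : ℕ) then
        t - 2 * Complex.I * (b : ℂ) *
          ((Real.cos (((i : ℕ) + 1) * Real.pi / ((m : ℝ) + 1)) : ℝ) : ℂ)
      else if (i : ℕ) + (j : ℕ) + 1 = m then
        -((-1) ^ (m - 1 - (i : ℕ)) * Complex.I ^ m * (μ : ℂ))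
      else 0 := by
  simp only [Matrix.sub_apply, Matrix.smul_apply, Matrix.one_apply, Bmat, Matrix.of_apply,
    smul_eq_mul]
  by_cases h : i = j
  · subst h
    simp
  · have h' : (i : ℕ) ≠ (j : ℕ) := fun hc => h (Fin.ext hc)
    rw [if_neg h, if_neg h, if_neg h']
    by_cases h2 : (i : ℕ) + (j : ℕ) + 1 = m
    · rw [if_pos h2, if_pos h2]; ring
    · rw [if_neg h2, if_neg h2]; ring

/-- For `m` even, the characteristic polynomial of `B` factors as
`det(t I_m - B) = ∏_{s=1}^{m/2} (t² + 4b² cos²(sπ/(m+1)) + μ²)`, so the eigenvalues of `B`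
are `± ι √(4b² cos²(sπ/(m+1)) + μ²)` for `s = 1, …, m/2`. -/
theorem det_smul_one_sub_Bmat (m : ℕ) (hm : Even m) (hm0 : 0 < m) (b μ : ℝ) (t : ℂ) :
    (t • (1 : Matrix (Fin m) (Fin m) ℂ) - Bmat m b μ).det =
      ∏ s ∈ Finset.Icc 1 (m / 2),
        (t ^ 2 + ((4 * b ^ 2 * Real.cos ((s : ℝ) * Real.pi / ((m : ℝ) + 1)) ^ 2
          + μ ^ 2 : ℝ) : ℂ)) := by

  have hmod : m % 2 = 0 := Nat.even_iff.mp hm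
  set D : Fin (m / 2) → Matrix (Fin 2) (Fin 2) ℂ := fun s =>
    !![t - 2 * Complex.I * (b : ℂ) *
        ((Real.cos (((s : ℕ) + 1) * Real.pi / ((m : ℝ) + 1)) : ℝ) : ℂ),
      -((-1) ^ (m - 1 - (s : ℕ)) * Complex.I ^ m * (μ : ℂ));
      -((-1) ^ (m - 1 - (m - 1 - (s : ℕ))) * Complex.I ^ m * (μ : ℂ)),
      t - 2 * Complex.I * (b : ℂ) *
        ((Real.cos (((m - 1 - (s : ℕ) : ℕ) + 1) * Real.pi / ((m : ℝ) + 1)) : ℝ) : ℂ)] with hD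
  have key : (t • (1 : Matrix (Fin m) (Fin m) ℂ) - Bmat m b μ).submatrix
      (crossEquiv m hmod) (crossEquiv m hmod) = Matrix.blockDiagonal D := by
    ext ⟨i, s⟩ ⟨j, s'⟩
    have hs := s.2
    have hs' := s'.2
    rw [Matrix.submatrix_apply, Amat_apply, Matrix.blockDiagonal_apply]
    fin_cases i <;> fin_cases j <;>
      simp only [Fin.mk_zero, Fin.mk_one, crossEquiv_zero, crossEquiv_one] <;>
      rcases eq_or_ne s s' with h | h
    · subst h
      rw [if_pos rfl, if_pos rfl, hD]
      simp
    · rw [if_neg (fun hc => h (Fin.ext hc)), if_neg (by omega), if_neg h]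
    · subst h
      rw [if_neg (by omega), if_pos (by omega), if_pos rfl, hD]
      simp
    · rw [if_neg (by omega), if_neg (by simp [Fin.ext_iff] at h; omega), if_neg h]
    · subst h
      rw [if_neg (by omega), if_pos (by omega), if_pos rfl, hD]
      simp
    · rw [if_neg (by omega), if_neg (by simp [Fin.ext_iff] at h; omega), if_neg h]
    · subst h
      rw [if_pos rfl, if_pos rfl, hD]
      simp
    · rw [if_neg (by simp [Fin.ext_iff] at h; omega), if_neg (by omega), if_neg h]
  calc (t • (1 : Matrix (Fin m) (Fin m) ℂ) - Bmat m b μ).det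
      = (Matrix.blockDiagonal D).det := by
        rw [← Matrix.det_submatrix_equiv_self (crossEquiv m hmod), key]
    _ = ∏ s : Fin (m / 2), (D s).det := Matrix.det_blockDiagonal D
    _ = ∏ s : Fin (m / 2),
        (t ^ 2 + ((4 * b ^ 2 * Real.cos (((s : ℕ) + 1 : ℝ) * Real.pi / ((m : ℝ) + 1)) ^ 2
          + μ ^ 2 : ℝ) : ℂ)) := by
        refine Finset.prod_congr rfl fun s _ => ?_
        have hs := s.2
        rw [hD, Matrix.det_fin_two_of]
        have hcos : ((m - 1 - (s : ℕ) : ℕ) + 1 : ℝ) * Real.pi / ((m : ℝ) + 1)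
            = Real.pi - (((s : ℕ) + 1 : ℝ) * Real.pi / ((m : ℝ) + 1)) := by
          have h1 : ((m - 1 - (s : ℕ) : ℕ) : ℝ) = (m : ℝ) - 1 - (s : ℕ) := by
            have h0 : m - 1 - (s : ℕ) + (1 + (s : ℕ)) = m := by omega
            have h0' := congrArg (Nat.cast : ℕ → ℝ) h0
            push_cast at h0'
            linarith
          rw [h1]
          have hm1 : (m : ℝ) + 1 ≠ 0 := by positivity
          field_simp
          ring
        have hsign : ((-1 : ℂ) ^ (m - 1 - (s : ℕ)) * Complex.I ^ m * (μ : ℂ)) *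
            ((-1 : ℂ) ^ (m - 1 - (m - 1 - (s : ℕ))) * Complex.I ^ m * (μ : ℂ))
            = -(μ : ℂ) ^ 2 := by
          have h1 : m - 1 - (m - 1 - (s : ℕ)) = (s : ℕ) := by omega
          rw [h1]
          have h2 : (-1 : ℂ) ^ (m - 1 - (s : ℕ)) * (-1 : ℂ) ^ (s : ℕ) = -1 := by
            rw [← pow_add]
            have h3 : m - 1 - (s : ℕ) + (s : ℕ) = m - 1 := by omega
            rw [h3]
            exact Odd.neg_one_pow (Nat.odd_iff.mpr (by omega))
          have h3 : Complex.I ^ m * Complex.I ^ m = 1 := by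
            rw [← pow_add, ← two_mul, pow_mul, Complex.I_sq]
            exact Even.neg_one_pow hm
          calc ((-1 : ℂ) ^ (m - 1 - (s : ℕ)) * Complex.I ^ m * (μ : ℂ)) *
              ((-1 : ℂ) ^ (s : ℕ) * Complex.I ^ m * (μ : ℂ))
              = ((-1 : ℂ) ^ (m - 1 - (s : ℕ)) * (-1 : ℂ) ^ (s : ℕ)) *
                (Complex.I ^ m * Complex.I ^ m) * (μ : ℂ) ^ 2 := by ring
            _ = -(μ : ℂ) ^ 2 := by rw [h2, h3]; ring
        rw [hcos, Real.cos_pi_sub, neg_mul_neg, hsign]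
        simp only [Complex.ofReal_add, Complex.ofReal_mul, Complex.ofReal_pow,
          Complex.ofReal_neg, Complex.ofReal_ofNat]
        set c : ℂ := ((Real.cos (((s : ℕ) + 1 : ℝ) * Real.pi / ((m : ℝ) + 1)) : ℝ) : ℂ) with hc
        linear_combination (-4 * (b : ℂ) ^ 2 * c ^ 2) * Complex.I_sq
    _ = ∏ s ∈ Finset.Icc 1 (m / 2),
        (t ^ 2 + ((4 * b ^ 2 * Real.cos ((s : ℝ) * Real.pi / ((m : ℝ) + 1)) ^ 2
          + μ ^ 2 : ℝ) : ℂ)) := by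
        rw [Fin.prod_univ_eq_prod_range (fun k =>
            (t ^ 2 + ((4 * b ^ 2 * Real.cos (((k : ℕ) + 1 : ℝ) * Real.pi / ((m : ℝ) + 1)) ^ 2
              + μ ^ 2 : ℝ) : ℂ))) (m / 2), ← Finset.Ico_add_one_right_eq_Icc, Finset.prod_Ico_eq_prod_range]
        refine Finset.prod_congr (by rw [Nat.add_sub_cancel]) fun i _ => ?_
        have h1 : ((1 + i : ℕ) : ℝ) = (i : ℝ) + 1 := by push_cast; ring
        rw [h1]
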